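/- Under the assumptions that A is n×n with ρ(A) ≥ 1, W is symmetric positive semidefinite, (A,√W) is controllable, and P̄₀ is symmetric positive semidefinite: there exist constants N > 0 and η > 0 such that c(i) = Tr(A^i P̄₀ (A^⊤)^i) + ∑_{m=0}^{i−1} Tr(A^m W (A^⊤)^m) ≥ η·ρ(A)^(2i) for all i > N. -/

import Mathlib

noncomputable def specRad {n : ℕ} (Z : Matrix (Fin n) (Fin n) ℂ) : ℝ :=
  ⨆ μ ∈ spectrum ℂ Z, ‖μ‖

noncomputable def specRadR {n : ℕ} (Z : Matrix (Fin n) (Fin n) ℝ) : ℝ :=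
  specRad (Z.map Complex.ofReal)

/-- The positive semidefinite square root of a positive semidefinite matrix
(restored with its December 2024 Mathlib definition). -/
noncomputable def Matrix.PosSemidef.sqrt {m : Type*} [Fintype m] [DecidableEq m]
    {𝕜 : Type*} [RCLike 𝕜] [PartialOrder 𝕜] {M : Matrix m m 𝕜} (hM : M.PosSemidef) : Matrix m m 𝕜 :=
  (hM.1.eigenvectorUnitary : Matrix m m 𝕜) *
    Matrix.diagonal ((↑) ∘ (fun x : ℝ => Real.sqrt x) ∘ hM.1.eigenvalues) *
    (star hM.1.eigenvectorUnitary : Matrix m m 𝕜)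

section Aux

open Matrix

variable {n : ℕ}

private lemma mapC_mul (E F : Matrix (Fin n) (Fin n) ℝ) :
    (E * F).map Complex.ofReal = E.map Complex.ofReal * F.map Complex.ofReal :=
  Matrix.map_mul (f := Complex.ofRealHom)

private lemma mapC_pow (E : Matrix (Fin n) (Fin n) ℝ) (m : ℕ) :
    (E ^ m).map Complex.ofReal = (E.map Complex.ofReal) ^ m := by
  induction m with
  | zero => ext i j; simp [Matrix.one_apply]; split <;> simp
  | succ k ih => rw [pow_succ, pow_succ, mapC_mul, ih]

private lemma psd_trace_nonneg {M : Matrix (Fin n) (Fin n) ℝ} (h : M.PosSemidef) :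
    0 ≤ M.trace := by
  rw [Matrix.trace]
  refine Finset.sum_nonneg fun j _ => ?_
  exact h.diag_nonneg

private lemma psd_sqrt_herm {W : Matrix (Fin n) (Fin n) ℝ} (hW : W.PosSemidef) :
    hW.sqrtᴴ = hW.sqrt := by
  unfold Matrix.PosSemidef.sqrt
  rw [conjTranspose_mul, conjTranspose_mul, Matrix.star_eq_conjTranspose,
    conjTranspose_conjTranspose, diagonal_conjTranspose, Matrix.mul_assoc]
  congr 3

private lemma psd_sqrt_mul_self {W : Matrix (Fin n) (Fin n) ℝ} (hW : W.PosSemidef) :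
    hW.sqrt * hW.sqrt = W := by
  have hU0 : (star hW.1.eigenvectorUnitary : Matrix (Fin n) (Fin n) ℝ) *
      (hW.1.eigenvectorUnitary : Matrix (Fin n) (Fin n) ℝ) = 1 := by
    simpa using Unitary.star_mul_self hW.1.eigenvectorUnitary
  have hU : ∀ X : Matrix (Fin n) (Fin n) ℝ,
      (star hW.1.eigenvectorUnitary : Matrix (Fin n) (Fin n) ℝ) *
      ((hW.1.eigenvectorUnitary : Matrix (Fin n) (Fin n) ℝ) * X) = X := by
    intro X
    rw [← Matrix.mul_assoc, hU0, Matrix.one_mul]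
  conv_rhs => rw [hW.1.spectral_theorem, Unitary.conjStarAlgAut_apply]
  unfold Matrix.PosSemidef.sqrt
  simp only [Matrix.mul_assoc]
  rw [hU, ← Matrix.mul_assoc (Matrix.diagonal _) (Matrix.diagonal _),
    Matrix.diagonal_mul_diagonal]
  congr 3
  funext i
  simp [Real.mul_self_sqrt (hW.eigenvalues_nonneg i)]

private lemma L_CS (E : Matrix (Fin n) (Fin n) ℝ) (v : Fin n → ℂ) :
    ∑ k, Complex.normSq ((Eᵀ.map Complex.ofReal *ᵥ v) k) ≤
      (E * Eᵀ).trace * ∑ j, Complex.normSq (v j) := by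
  have key : ∀ k, Complex.normSq ((Eᵀ.map Complex.ofReal *ᵥ v) k) ≤
      (∑ j, E j k ^ 2) * ∑ j, Complex.normSq (v j) := by
    intro k
    have h1 : ‖(Eᵀ.map Complex.ofReal *ᵥ v) k‖ ≤ ∑ j, |E j k| * ‖v j‖ := by
      rw [Matrix.mulVec]
      refine (norm_sum_le _ _).trans ?_
      refine Finset.sum_le_sum fun j _ => ?_
      simp [dotProduct, Matrix.map_apply, Complex.norm_real, Real.norm_eq_abs]
    have h2 : (∑ j, |E j k| * ‖v j‖) ^ 2 ≤
        (∑ j, |E j k| ^ 2) * ∑ j, ‖v j‖ ^ 2 :=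
      Finset.sum_mul_sq_le_sq_mul_sq _ _ _
    calc Complex.normSq ((Eᵀ.map Complex.ofReal *ᵥ v) k)
        = ‖(Eᵀ.map Complex.ofReal *ᵥ v) k‖ ^ 2 := (Complex.normSq_eq_norm_sq _)
      _ ≤ (∑ j, |E j k| * ‖v j‖) ^ 2 := by
          apply pow_le_pow_left₀ (norm_nonneg _) h1
      _ ≤ (∑ j, |E j k| ^ 2) * ∑ j, ‖v j‖ ^ 2 := h2
      _ = (∑ j, E j k ^ 2) * ∑ j, Complex.normSq (v j) := by
          simp [_root_.sq_abs, Complex.normSq_eq_norm_sq]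
  calc ∑ k, Complex.normSq ((Eᵀ.map Complex.ofReal *ᵥ v) k)
      ≤ ∑ k, (∑ j, E j k ^ 2) * ∑ j, Complex.normSq (v j) :=
        Finset.sum_le_sum fun k _ => key k
    _ = (E * Eᵀ).trace * ∑ j, Complex.normSq (v j) := by
        rw [← Finset.sum_mul]
        congr 1
        rw [Matrix.trace]
        rw [Finset.sum_comm]
        congr 1; ext j
        simp [Matrix.diag, Matrix.mul_apply, sq]

end Aux

open Matrix

theorem stmt_15 {n : ℕ} (A W P0 : Matrix (Fin n) (Fin n) ℝ)
    (hA : 1 ≤ specRadR A) (hW : W.PosSemidef)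
    (hctrb : (Matrix.of fun (j : Fin n) (p : Fin n × Fin n) =>
        (A ^ (p.1 : ℕ) * hW.sqrt) j p.2).rank = n)
    (hP0 : P0.PosSemidef) :
    ∃ N : ℕ, ∃ η : ℝ, 0 < N ∧ 0 < η ∧ ∀ i : ℕ, N < i →
      η * specRadR A ^ (2 * i) ≤
        (A ^ i * P0 * (A ^ i).transpose).trace +
          ∑ m ∈ Finset.range i, (A ^ m * W * (A ^ m).transpose).trace := by
  classical
  set Ac := A.map Complex.ofReal with hAcdef
  have hspec : ∃ μ ∈ spectrum ℂ Ac, specRadR A ≤ ‖μ‖ := by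
    have hne : (spectrum ℂ Ac).Nonempty := by
      by_contra h
      rw [Set.not_nonempty_iff_eq_empty] at h
      have h0 : specRadR A = 0 := by
        unfold specRadR specRad
        rw [show (A.map Complex.ofReal) = Ac from rfl, h]
        have hz : ∀ μ : ℂ, (⨆ _ : μ ∈ (∅ : Set ℂ), ‖μ‖) = 0 := fun μ => by
          haveI : IsEmpty (μ ∈ (∅ : Set ℂ)) := ⟨fun h => h⟩
          exact Real.iSup_of_isEmpty _
        simp_rw [hz]
        exact ciSup_const
      linarith
    obtain ⟨μ, hμS, hmax⟩ := Set.Finite.exists_maximalFor (fun μ : ℂ => ‖μ‖)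
      (spectrum ℂ Ac) (Matrix.finite_spectrum Ac) hne
    have hmax' : ∀ ν ∈ spectrum ℂ Ac, ‖ν‖ ≤ ‖μ‖ := by
      intro ν hν
      rcases le_or_gt ‖ν‖ ‖μ‖ with h | h
      · exact h
      · exact (hmax hν h.le).ge
    refine ⟨μ, hμS, ?_⟩
    unfold specRadR specRad
    refine Real.iSup_le (fun ν => ?_) (norm_nonneg _)
    exact Real.iSup_le (fun hν => hmax' ν hν) (norm_nonneg _)
  obtain ⟨μ, hμS, hle⟩ := hspec
  have hμ1 : 1 ≤ ‖μ‖ := hA.trans hle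
  have hμpos : (0:ℝ) < ‖μ‖ := lt_of_lt_of_le one_pos hμ1
  -- eigenvector of the transpose
  have heig : ∃ v : Fin n → ℂ, v ≠ 0 ∧ Acᵀ *ᵥ v = μ • v := by
    rw [spectrum.mem_iff] at hμS
    have hdet : (μ • (1 : Matrix (Fin n) (Fin n) ℂ) - Acᵀ).det = 0 := by
      rw [show μ • (1 : Matrix (Fin n) (Fin n) ℂ) - Acᵀ = (μ • 1 - Ac)ᵀ by
        rw [Matrix.transpose_sub, Matrix.transpose_smul, Matrix.transpose_one]]
      rw [Matrix.det_transpose]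
      by_contra hd
      exact hμS (by
        rw [Algebra.algebraMap_eq_smul_one]
        exact (Matrix.isUnit_iff_isUnit_det _).mpr (isUnit_iff_ne_zero.mpr hd))
    obtain ⟨v, hv0, hv⟩ := (Matrix.exists_mulVec_eq_zero_iff).mpr hdet
    refine ⟨v, hv0, ?_⟩
    rw [Matrix.sub_mulVec, sub_eq_zero] at hv
    rw [← hv, Matrix.smul_mulVec, Matrix.one_mulVec]
  obtain ⟨v, hv0, hv⟩ := heig
  have hvm : ∀ m : ℕ, (Acᵀ) ^ m *ᵥ v = μ ^ m • v := by
    intro m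
    induction m with
    | zero => simp [Matrix.one_mulVec]
    | succ k ih =>
        rw [pow_succ, ← Matrix.mulVec_mulVec, hv, Matrix.mulVec_smul, ih, pow_succ,
          smul_smul, mul_comm μ (μ ^ k)]
  set B := hW.sqrt with hBdef
  have hBsym : Bᵀ = B := by
    rw [← Matrix.conjTranspose_eq_transpose_of_trivial]
    exact psd_sqrt_herm hW
  have hBB : B * B = W := psd_sqrt_mul_self hW
  set u₀ := B.map Complex.ofReal *ᵥ v with hu₀def
  have hum : ∀ m : ℕ, ((A ^ m * B)ᵀ).map Complex.ofReal *ᵥ v = μ ^ m • u₀ := by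
    intro m
    rw [Matrix.transpose_mul, hBsym, mapC_mul, Matrix.transpose_map, mapC_pow,
      Matrix.transpose_pow, ← Matrix.mulVec_mulVec]
    rw [← hAcdef, hvm, Matrix.mulVec_smul]
  -- u₀ ≠ 0 by controllability
  have hu₀ne : u₀ ≠ 0 := by
    intro h0
    have hzero : ∀ (m : ℕ) (k : Fin n), (∑ j, ((A ^ m * B) j k : ℂ) * v j) = 0 := by
      intro m k
      have h := hum m
      rw [h0, smul_zero] at h
      have h2 := congrFun h k
      simpa only [Matrix.mulVec, dotProduct, Matrix.map_apply,
        Matrix.transpose_apply, Pi.zero_apply] using h2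
    have hre : ∀ (m : ℕ) (k : Fin n), (∑ j, (A ^ m * B) j k * (v j).re) = 0 := by
      intro m k
      have := congrArg Complex.re (hzero m k)
      simpa [Complex.mul_re] using this
    have him : ∀ (m : ℕ) (k : Fin n), (∑ j, (A ^ m * B) j k * (v j).im) = 0 := by
      intro m k
      have := congrArg Complex.im (hzero m k)
      simpa [Complex.mul_im] using this
    have hxy : (fun j => (v j).re) ≠ 0 ∨ (fun j => (v j).im) ≠ 0 := by
      by_contra h
      push_neg at h
      apply hv0
      funext j
      have h1 := congrFun h.1 j
      have h2 := congrFun h.2 j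
      exact Complex.ext (by simpa using h1) (by simpa using h2)
    obtain ⟨z, hz0, hz⟩ : ∃ z : Fin n → ℝ, z ≠ 0 ∧
        ∀ (m : ℕ) (k : Fin n), (∑ j, (A ^ m * B) j k * z j) = 0 := by
      rcases hxy with h | h
      · exact ⟨_, h, hre⟩
      · exact ⟨_, h, him⟩
    set C := (Matrix.of fun (j : Fin n) (p : Fin n × Fin n) =>
      (A ^ (p.1 : ℕ) * B) j p.2) with hCdef
    have hCz : Cᵀ *ᵥ z = 0 := by
      funext p
      simpa [Matrix.mulVec, dotProduct, Matrix.transpose_apply, hCdef] using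
        hz p.1 p.2
    have hrk : Cᵀ.rank = n := by rw [Matrix.rank_transpose]; exact hctrb
    have hker : z ∈ LinearMap.ker (Cᵀ).mulVecLin := by
      rw [LinearMap.mem_ker, Matrix.mulVecLin_apply]; exact hCz
    have hrn := LinearMap.finrank_range_add_finrank_ker (Cᵀ).mulVecLin
    rw [Module.finrank_fintype_fun_eq_card, Fintype.card_fin] at hrn
    have hrdef : Cᵀ.rank = Module.finrank ℝ (LinearMap.range (Cᵀ).mulVecLin) := rfl
    have hk0 : Module.finrank ℝ (LinearMap.ker (Cᵀ).mulVecLin) = 0 := by omega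
    have hbot := Submodule.finrank_eq_zero.mp hk0
    rw [hbot] at hker
    exact hz0 (by simpa using hker)
  set β := ∑ k, Complex.normSq (u₀ k) with hβdef
  set V := ∑ j, Complex.normSq (v j) with hVdef
  have hβpos : 0 < β := by
    obtain ⟨k, hk⟩ := Function.ne_iff.mp hu₀ne
    have h1 : 0 < Complex.normSq (u₀ k) := Complex.normSq_pos.mpr (by simpa using hk)
    have h2 : Complex.normSq (u₀ k) ≤ β :=
      Finset.single_le_sum (fun j _ => Complex.normSq_nonneg _) (Finset.mem_univ k)
    linarith
  have hVpos : 0 < V := by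
    obtain ⟨k, hk⟩ := Function.ne_iff.mp hv0
    have h1 : 0 < Complex.normSq (v k) := Complex.normSq_pos.mpr (by simpa using hk)
    have h2 : Complex.normSq (v k) ≤ V :=
      Finset.single_le_sum (fun j _ => Complex.normSq_nonneg _) (Finset.mem_univ k)
    linarith
  have key : ∀ m : ℕ, ‖μ‖ ^ (2 * m) * β ≤ (A ^ m * W * (A ^ m)ᵀ).trace * V := by
    intro m
    have h1 : ∑ k, Complex.normSq ((((A ^ m * B)ᵀ).map Complex.ofReal *ᵥ v) k)
        = ‖μ‖ ^ (2 * m) * β := by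
      rw [hum m]
      simp only [Pi.smul_apply, smul_eq_mul, _root_.map_mul, map_pow]
      rw [← Finset.mul_sum]
      congr 1
      rw [Complex.normSq_eq_norm_sq, ← pow_mul]
    have h2 := L_CS (A ^ m * B) v
    have h3 : (A ^ m * B) * (A ^ m * B)ᵀ = A ^ m * W * (A ^ m)ᵀ := by
      rw [Matrix.transpose_mul, hBsym, ← Matrix.mul_assoc, Matrix.mul_assoc (A ^ m) B B, hBB]
    rw [h3, h1] at h2
    exact h2
  refine ⟨1, β / (‖μ‖ ^ 2 * V), one_pos,
    div_pos hβpos (mul_pos (pow_pos hμpos 2) hVpos), ?_⟩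
  intro i hi
  obtain ⟨m, rfl⟩ : ∃ m, i = m + 1 := ⟨i - 1, by omega⟩
  set T := (A ^ m * W * (A ^ m)ᵀ).trace with hTdef
  have hstep : β / (‖μ‖ ^ 2 * V) * ‖μ‖ ^ (2 * (m + 1)) ≤ T := by
    rw [show 2 * (m + 1) = 2 * m + 2 by ring, pow_add, div_mul_eq_mul_div,
      div_le_iff₀ (mul_pos (pow_pos hμpos 2) hVpos)]
    have h2 := mul_le_mul_of_nonneg_right (key m) (le_of_lt (pow_pos hμpos 2))
    nlinarith [h2]
  have hρnn : (0:ℝ) ≤ specRadR A := by linarith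
  have hρ : specRadR A ^ (2 * (m + 1)) ≤ ‖μ‖ ^ (2 * (m + 1)) :=
    pow_le_pow_left₀ hρnn hle _
  have hηρ : β / (‖μ‖ ^ 2 * V) * specRadR A ^ (2 * (m + 1)) ≤ T :=
    le_trans (mul_le_mul_of_nonneg_left hρ
      (le_of_lt (div_pos hβpos (mul_pos (pow_pos hμpos 2) hVpos)))) hstep
  have htr1 : 0 ≤ (A ^ (m + 1) * P0 * (A ^ (m + 1))ᵀ).trace := by
    apply psd_trace_nonneg
    have hps := hP0.mul_mul_conjTranspose_same (A ^ (m + 1))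
    rwa [Matrix.conjTranspose_eq_transpose_of_trivial] at hps
  have htr2 : ∀ l ∈ Finset.range (m + 1), 0 ≤ (A ^ l * W * (A ^ l)ᵀ).trace := by
    intro l _
    apply psd_trace_nonneg
    have hps := hW.mul_mul_conjTranspose_same (A ^ l)
    rwa [Matrix.conjTranspose_eq_transpose_of_trivial] at hps
  have hsum : T ≤ ∑ l ∈ Finset.range (m + 1), (A ^ l * W * (A ^ l)ᵀ).trace :=
    Finset.single_le_sum htr2 (Finset.self_mem_range_succ m)
  linarith [hηρ, htr1, hsum]
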